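/- arXiv:2001.00037 — 5 statements merged into one kernel-verified Lean document; each statement's English description precedes it below -/
import Mathlib

section
/- Let H be a 3-hypergraph, π a quasigraph in H, and X, Y ⊆ V(H) such that π is anticonnected on both X and Y. If there is a hyperedge h of H intersecting both X and Y such that π(h) ⊆ X or π(h) ⊆ Y (allowing π(h) = ∅), then π is anticonnected on X ∪ Y. -/
open Finset

variable {V : Type*} [DecidableEq V] [Fintype V]

/-- A 3-hypergraph: a set of hyperedges, each of size 2 or 3. -/
structure Hypergraph3 (V : Type*) where
  edges : Finset (Finset V)
  card_edges : ∀ e ∈ edges, e.card = 2 ∨ e.card = 3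

/-- A quasigraph assigns to each hyperedge either a 2-element subset of it or ∅. -/
def IsQuasigraph (H : Hypergraph3 V) (π : Finset V → Finset V) : Prop :=
  ∀ e ∈ H.edges, π e = ∅ ∨ (π e ⊆ e ∧ (π e).card = 2)

/-- A set `f` crosses a partition `R` if it meets at least two classes. -/
def Crosses (f : Finset V) {X : Finset V} (R : Finpartition X) : Prop :=
  ∃ A ∈ R.parts, ∃ B ∈ R.parts, A ≠ B ∧ (f ∩ A).Nonempty ∧ (f ∩ B).Nonempty

/-- `π` is anticonnected on `X` (in `H`): every nontrivial partition of `X` is crossed by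
some hyperedge whose `π`-value is empty or lies in one class. -/
def Anticonnected (H : Hypergraph3 V) (π : Finset V → Finset V) (X : Finset V) : Prop :=
  ∀ R : Finpartition X, R.parts ≠ {X} →
    ∃ f ∈ H.edges, Crosses f R ∧ (π f = ∅ ∨ ∃ C ∈ R.parts, π f ⊆ C)

/-- The graph `π*` on `V` whose edges are the pairs `π e` over used hyperedges `e`. -/
def quasiStar (H : Hypergraph3 V) (π : Finset V → Finset V) : SimpleGraph V :=
  SimpleGraph.fromRel fun u v => ∃ e ∈ H.edges, π e = {u, v}

/-- `π` is connected on `X`: the subgraph of `π*` induced on `X` is connected. -/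
def ConnectedOn (H : Hypergraph3 V) (π : Finset V → Finset V) (X : Finset V) : Prop :=
  ((quasiStar H π).induce (↑X : Set V)).Connected

/-- The hypergraph `H − e`. -/
def Hypergraph3.erase (H : Hypergraph3 V) (e : Finset V) : Hypergraph3 V :=
  ⟨H.edges.erase e, fun f hf => H.card_edges f (Finset.mem_of_mem_erase hf)⟩

/-- Restriction of a partition of `S` to a subset `X`. -/
def Finpartition.restrictTo {S : Finset V} (R : Finpartition S) (X : Finset V)
    (hXS : X ⊆ S) : Finpartition X where
  parts := (R.parts.image (· ∩ X)).filter (·.Nonempty)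
  supIndep := by
    rw [Finset.supIndep_iff_pairwiseDisjoint]
    intro a ha b hb hab
    simp only [coe_filter, Set.mem_setOf_eq, mem_image] at ha hb
    obtain ⟨⟨A, hA, rfl⟩, _⟩ := ha
    obtain ⟨⟨B, hB, rfl⟩, _⟩ := hb
    have hAB : A ≠ B := fun e => hab (by rw [e])
    exact (R.disjoint hA hB hAB).mono inter_subset_left inter_subset_left
  sup_parts := by
    apply le_antisymm
    · refine Finset.sup_le fun a ha => ?_
      simp only [mem_filter, mem_image] at ha
      obtain ⟨⟨A, _, rfl⟩, _⟩ := ha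
      exact inter_subset_right
    · intro x hx
      obtain ⟨A, hA, hxA⟩ := R.exists_mem (hXS hx)
      refine Finset.mem_sup.2 ⟨A ∩ X, ?_, mem_inter.2 ⟨hxA, hx⟩⟩
      exact mem_filter.2 ⟨mem_image.2 ⟨A, hA, rfl⟩, ⟨x, mem_inter.2 ⟨hxA, hx⟩⟩⟩
  bot_notMem := by
    simp only [bot_eq_empty, mem_filter]
    rintro ⟨-, h⟩
    exact not_nonempty_empty h

lemma restrict_case (H : Hypergraph3 V) (π : Finset V → Finset V)
    {X S : Finset V} (hX : Anticonnected H π X) (R : Finpartition S) (hXS : X ⊆ S)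
    (hnot : ¬ ∃ A ∈ R.parts, X ⊆ A) :
    ∃ f ∈ H.edges, Crosses f R ∧ (π f = ∅ ∨ ∃ C ∈ R.parts, π f ⊆ C) := by
  set R' := R.restrictTo X hXS with hR'
  have hmem : ∀ a ∈ R'.parts, ∃ A ∈ R.parts, a = A ∩ X := by
    intro a ha
    simp only [hR', Finpartition.restrictTo, mem_filter, mem_image] at ha
    obtain ⟨⟨A, hA, rfl⟩, -⟩ := ha
    exact ⟨A, hA, rfl⟩
  have hnt : R'.parts ≠ {X} := by
    intro hp
    have hXp : X ∈ R'.parts := by rw [hp]; exact mem_singleton_self X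
    obtain ⟨A, hA, hAX⟩ := hmem X hXp
    exact hnot ⟨A, hA, hAX ▸ inter_subset_left⟩
  obtain ⟨f, hf, ⟨a, ha, b, hb, hab, hfa, hfb⟩, hC⟩ := hX R' hnt
  obtain ⟨A, hA, rfl⟩ := hmem a ha
  obtain ⟨B, hB, rfl⟩ := hmem b hb
  refine ⟨f, hf, ⟨A, hA, B, hB, fun e => hab (by rw [e]),
    hfa.mono (inter_subset_inter Subset.rfl inter_subset_left),
    hfb.mono (inter_subset_inter Subset.rfl inter_subset_left)⟩, ?_⟩
  rcases hC with h0 | ⟨c, hc, hsub⟩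
  · exact Or.inl h0
  · obtain ⟨C, hCp, rfl⟩ := hmem c hc
    exact Or.inr ⟨C, hCp, hsub.trans inter_subset_left⟩

theorem union_anticonnected_of_hyperedge
    (H : Hypergraph3 V) (π : Finset V → Finset V) (hπ : IsQuasigraph H π)
    (X Y : Finset V)
    (hX : Anticonnected H π X) (hY : Anticonnected H π Y)
    (h : Finset V) (hh : h ∈ H.edges)
    (hhX : (h ∩ X).Nonempty) (hhY : (h ∩ Y).Nonempty)
    (hval : π h ⊆ X ∨ π h ⊆ Y) :
    Anticonnected H π (X ∪ Y) := by
  intro R hR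
  by_cases hXc : ∃ A ∈ R.parts, X ⊆ A
  · by_cases hYc : ∃ B ∈ R.parts, Y ⊆ B
    · obtain ⟨A, hA, hXA⟩ := hXc
      obtain ⟨B, hB, hYB⟩ := hYc
      have hAB : A ≠ B := by
        rintro rfl
        apply hR
        have hA_eq : A = X ∪ Y :=
          le_antisymm (R.le hA) (union_subset hXA hYB)
        apply Finset.eq_singleton_iff_unique_mem.2
        refine ⟨hA_eq ▸ hA, fun P hP => ?_⟩
        by_contra hne
        have hdisj := R.disjoint hP hA (fun e => hne (e.trans hA_eq))
        have hPsub : P ⊆ X ∪ Y := R.le hP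
        obtain ⟨x, hx⟩ := R.nonempty_of_mem_parts hP
        exact Finset.disjoint_left.1 hdisj hx (hA_eq ▸ hPsub hx)
      refine ⟨h, hh, ⟨A, hA, B, hB, hAB,
        hhX.mono (inter_subset_inter Subset.rfl hXA),
        hhY.mono (inter_subset_inter Subset.rfl hYB)⟩, ?_⟩
      rcases hval with hv | hv
      · exact Or.inr ⟨A, hA, hv.trans hXA⟩
      · exact Or.inr ⟨B, hB, hv.trans hYB⟩
    · exact restrict_case H π hY R subset_union_right hYc
  · exact restrict_case H π hX R subset_union_left hXc
end

section
/- Let π be a quasigraph in a 3-hypergraph H and Y ⊆ X ⊆ V(H). Suppose e is a hyperedge of H not used by π containing vertices u, v ∈ Y, and let ρ = π + (uv)_e. If π is anticonnected on X and ρ is anticonnected on Y, then ρ is anticonnected on X. -/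
open Finset

variable {V : Type*} [DecidableEq V] [Fintype V]

/-- Restriction of a finpartition of `X` to a subset `Y`. -/
def Finpartition.restrictY {X : Finset V} (R : Finpartition X) (Y : Finset V) (hYX : Y ⊆ X) :
    Finpartition Y :=
  Finpartition.ofErase (R.parts.image (· ∩ Y))
    (by
      apply Finset.SupIndep.image (f := id) (g := (· ∩ Y))
      exact Finset.SupIndep.antitone_fun (fun A _ => Finset.inter_subset_left) R.supIndep)
    (by
      rw [Finset.sup_image]
      have : R.parts.sup (id ∘ (· ∩ Y)) = R.parts.sup (fun A => id A ⊓ Y) := rfl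
      rw [this, ← Finset.sup_inf_distrib_right, R.sup_parts]
      exact Finset.inter_eq_right.mpr hYX)

lemma restrictY_parts {X : Finset V} (R : Finpartition X) (Y : Finset V) (hYX : Y ⊆ X)
    {C : Finset V} (hC : C ∈ (R.restrictY Y hYX).parts) :
    ∃ A ∈ R.parts, C = A ∩ Y := by
  have := Finset.mem_of_mem_erase hC
  simp only [Finset.mem_image] at this
  obtain ⟨A, hA, hAC⟩ := this
  exact ⟨A, hA, hAC.symm⟩

lemma mem_restrictY_parts {X : Finset V} (R : Finpartition X) (Y : Finset V) (hYX : Y ⊆ X)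
    {A : Finset V} (hA : A ∈ R.parts) (hne : (A ∩ Y).Nonempty) :
    A ∩ Y ∈ (R.restrictY Y hYX).parts := by
  refine Finset.mem_erase.mpr ⟨?_, Finset.mem_image.mpr ⟨A, hA, rfl⟩⟩
  exact Finset.nonempty_iff_ne_empty.mp hne

theorem anticonnected_add_edge
    (H : Hypergraph3 V) (π : Finset V → Finset V) (hπ : IsQuasigraph H π)
    (X Y : Finset V) (hYX : Y ⊆ X)
    (e : Finset V) (he : e ∈ H.edges) (heπ : π e = ∅)
    (u v : V) (hu : u ∈ e) (hv : v ∈ e) (huY : u ∈ Y) (hvY : v ∈ Y) (huv : u ≠ v)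
    (hX : Anticonnected H π X)
    (hY : Anticonnected H (Function.update π e {u, v}) Y) :
    Anticonnected H (Function.update π e {u, v}) X := by
  intro R hR
  set ρ := Function.update π e {u, v} with hρ
  -- parts containing u and v
  obtain ⟨A, hA, huA⟩ := R.exists_mem (hYX huY)
  obtain ⟨B, hB, hvB⟩ := R.exists_mem (hYX hvY)
  by_cases hAB : A = B
  · -- u, v in the same part: use hX; if the edge found is e, e itself works with ρ e ⊆ A
    obtain ⟨f, hf, hcross, hcond⟩ := hX R hR
    by_cases hfe : f = e
    · subst hfe
      refine ⟨f, hf, hcross, Or.inr ⟨A, hA, ?_⟩⟩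
      have : ρ f = {u, v} := Function.update_self _ _ _
      rw [this]
      subst hAB
      intro x hx
      rcases Finset.mem_insert.mp hx with h | h
      · exact h ▸ huA
      · exact (Finset.mem_singleton.mp h) ▸ hvB
    · refine ⟨f, hf, hcross, ?_⟩
      have : ρ f = π f := Function.update_of_ne hfe _ _
      rw [this]; exact hcond
  · -- u, v in different parts: restrict to Y and use hY
    set R' := R.restrictY Y hYX with hR'
    have hAY : A ∩ Y ∈ R'.parts := mem_restrictY_parts R Y hYX hA ⟨u, Finset.mem_inter.mpr ⟨huA, huY⟩⟩
    have hBY : B ∩ Y ∈ R'.parts := mem_restrictY_parts R Y hYX hB ⟨v, Finset.mem_inter.mpr ⟨hvB, hvY⟩⟩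
    have hABY : A ∩ Y ≠ B ∩ Y := by
      intro h
      have hdisj := R.supIndep.pairwiseDisjoint hA hB hAB
      have : u ∈ B := (Finset.mem_inter.mp (h ▸ Finset.mem_inter.mpr ⟨huA, huY⟩)).1
      exact (Finset.disjoint_left.mp hdisj huA) this
    have hR'nt : R'.parts ≠ {Y} := by
      intro h
      rw [h] at hAY hBY
      exact hABY ((Finset.mem_singleton.mp hAY).trans (Finset.mem_singleton.mp hBY).symm)
    obtain ⟨g, hg, hgcross, hgcond⟩ := hY R' hR'nt
    refine ⟨g, hg, ?_, ?_⟩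
    · obtain ⟨C, hC, D, hD, hCD, hgC, hgD⟩ := hgcross
      obtain ⟨A', hA', rfl⟩ := restrictY_parts R Y hYX hC
      obtain ⟨B', hB', rfl⟩ := restrictY_parts R Y hYX hD
      refine ⟨A', hA', B', hB', ?_, ?_, ?_⟩
      · rintro rfl; exact hCD rfl
      · obtain ⟨x, hx⟩ := hgC
        simp only [Finset.mem_inter] at hx
        exact ⟨x, Finset.mem_inter.mpr ⟨hx.1, hx.2.1⟩⟩
      · obtain ⟨x, hx⟩ := hgD
        simp only [Finset.mem_inter] at hx
        exact ⟨x, Finset.mem_inter.mpr ⟨hx.1, hx.2.1⟩⟩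
    · rcases hgcond with h | ⟨C, hC, hgsub⟩
      · exact Or.inl h
      · obtain ⟨A', hA', rfl⟩ := restrictY_parts R Y hYX hC
        exact Or.inr ⟨A', hA', hgsub.trans Finset.inter_subset_left⟩
end

section
/- Let π be a quasigraph in a 3-hypergraph H, X ⊆ V(H) with π anticonnected on X, and Q a π-solid partition of V(H) refining {X, V(H)−X}. Let γ be a quasicycle in the complement of π/Q in H/Q all of whose vertices (classes of Q used by γ*) are subsets of X. If γ has a leading hyperedge e that is redundant with respect to π and Q, then there exist vertices u, v ∈ e lying in the two distinct classes forming γ(e/Q) such that the quasigraph π + (uv)_e is anticonnected on X. -/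
open Finset

variable {V : Type*} [DecidableEq V] [Fintype V]

/-- Auxiliary: if `π` is anticonnected on `A ⊆ X` in `H`, and no hyperedge of `H`
crossing `R` has `π`-value empty or inside a class of `R`, then `A` lies in one class. -/
lemma subset_class_of_anticonnected (H : Hypergraph3 V) (π : Finset V → Finset V)
    {X A : Finset V} (R : Finpartition X) (hA : A ⊆ X)
    (hanti : Anticonnected H π A)
    (hno : ∀ f ∈ H.edges, Crosses f R → ¬(π f = ∅ ∨ ∃ C ∈ R.parts, π f ⊆ C)) :
    ∃ D ∈ R.parts, A ⊆ D := by
  by_contra hcon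
  push_neg at hcon
  set S : Finset (Finset V) := R.parts.image (· ∩ A) with hS
  have hsupindep : S.SupIndep id := by
    rw [Finset.supIndep_iff_pairwiseDisjoint]
    intro x hx y hy hxy
    simp only [hS, Finset.mem_coe, Finset.mem_image] at hx hy
    obtain ⟨B, hB, rfl⟩ := hx
    obtain ⟨C, hC, rfl⟩ := hy
    have hBC : B ≠ C := by rintro rfl; exact hxy rfl
    exact (R.disjoint hB hC hBC).mono inf_le_left inf_le_left
  have hsup : S.sup id = A := by
    apply le_antisymm
    · refine Finset.sup_le ?_
      intro x hx
      simp only [hS, Finset.mem_image] at hx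
      obtain ⟨B, hB, rfl⟩ := hx
      exact Finset.inter_subset_right
    · intro a ha
      obtain ⟨B, hB, haB⟩ := R.exists_mem (hA ha)
      have : B ∩ A ∈ S := Finset.mem_image_of_mem _ hB
      exact (Finset.le_sup (f := id) this : B ∩ A ⊆ S.sup id) (Finset.mem_inter.2 ⟨haB, ha⟩)
  set P : Finpartition A := Finpartition.ofErase S hsupindep hsup with hP
  have hPparts : P.parts = S.erase ⊥ := rfl
  have hmemP : ∀ p ∈ P.parts, ∃ B ∈ R.parts, p = B ∩ A := by
    intro p hp
    rw [hPparts, Finset.mem_erase] at hp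
    obtain ⟨B, hB, rfl⟩ := Finset.mem_image.1 hp.2
    exact ⟨B, hB, rfl⟩
  have hne : P.parts ≠ {A} := by
    intro h
    have hAP : A ∈ P.parts := by rw [h]; exact Finset.mem_singleton_self _
    obtain ⟨B, hB, hBA⟩ := hmemP A hAP
    exact hcon B hB (hBA.le.trans Finset.inter_subset_left)
  obtain ⟨f, hf, hcross, hcond⟩ := hanti P hne
  apply hno f hf
  · obtain ⟨p, hp, q, hq, hpq, hfp, hfq⟩ := hcross
    obtain ⟨B, hB, rfl⟩ := hmemP p hp
    obtain ⟨C, hC, rfl⟩ := hmemP q hq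
    have hBC : B ≠ C := by rintro rfl; exact hpq rfl
    exact ⟨B, hB, C, hC, hBC,
      hfp.mono (Finset.inter_subset_inter (Finset.Subset.refl _) Finset.inter_subset_left),
      hfq.mono (Finset.inter_subset_inter (Finset.Subset.refl _) Finset.inter_subset_left)⟩
  · rcases hcond with h | ⟨C, hC, hsub⟩
    · exact Or.inl h
    · obtain ⟨B, hB, rfl⟩ := hmemP C hC
      exact Or.inr ⟨B, hB, hsub.trans Finset.inter_subset_left⟩

theorem qc_addition
    (H : Hypergraph3 V) (π : Finset V → Finset V) (hπ : IsQuasigraph H π)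
    (X : Finset V) (hX : Anticonnected H π X)
    (Q : Finpartition (Finset.univ : Finset V))
    (hsolid : ∀ A ∈ Q.parts, ConnectedOn H π A ∧ Anticonnected H π A)
    (hrefine : ∀ A ∈ Q.parts, A ⊆ X ∨ A ∩ X = ∅)
    -- the quasicycle γ, with consecutive vertices Qs 0, ..., Qs (k-1), all subsets of X
    (k : ℕ) (hk : 3 ≤ k) (Qs : ℕ → Finset V)
    (hQmem : ∀ i < k, Qs i ∈ Q.parts)
    (hQsub : ∀ i < k, Qs i ⊆ X)
    (hQinj : ∀ i < k, ∀ j < k, Qs i = Qs j → i = j)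
    (e : Finset V)
    (hcyc : ∀ j, 1 ≤ j → j < k →
      ∃ h ∈ H.edges, h ≠ e ∧ (h ∩ Qs (j - 1)).Nonempty ∧ (h ∩ Qs j).Nonempty ∧
        (π h = ∅ ∨ ∃ C ∈ Q.parts, π h ⊆ C))
    -- the leading hyperedge e, with γ(e/Q) = {Qs (k-1), Qs 0}, redundant w.r.t. π and Q
    (he : e ∈ H.edges) (heπ : π e = ∅)
    (he1 : (e ∩ Qs (k - 1)).Nonempty) (he2 : (e ∩ Qs 0).Nonempty)
    (hred : ∀ A ∈ Q.parts, Anticonnected (H.erase e) π A) :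
    ∃ u ∈ e ∩ Qs (k - 1), ∃ v ∈ e ∩ Qs 0,
      Anticonnected H (Function.update π e {u, v}) X := by
  obtain ⟨u, hu⟩ := he1
  obtain ⟨v, hv⟩ := he2
  refine ⟨u, hu, v, hv, ?_⟩
  intro R hR
  by_contra hno
  push_neg at hno
  -- no hyperedge other than e works for π either
  have hnoπ : ∀ f ∈ H.edges, f ≠ e → Crosses f R →
      ¬(π f = ∅ ∨ ∃ C ∈ R.parts, π f ⊆ C) := by
    intro f hf hfe hcross hcond
    obtain ⟨h1, h2⟩ := hno f hf hcross
    rw [Function.update_of_ne hfe] at h1 h2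
    rcases hcond with h | ⟨C, hC, hsub⟩
    · exact h1.ne_empty h
    · exact h2 C hC hsub
  -- each class of Q inside X lies inside one class of R
  have hclass : ∀ A ∈ Q.parts, A ⊆ X → ∃ D ∈ R.parts, A ⊆ D := by
    intro A hA hAX
    refine subset_class_of_anticonnected (H.erase e) π R hAX (hred A hA) ?_
    intro f hf hcross hcond
    have hf' : f ∈ H.edges ∧ f ≠ e := by
      have := Finset.mem_erase.1 hf
      exact ⟨this.2, this.1⟩
    exact hnoπ f hf'.1 hf'.2 hcross hcond
  -- distinct classes of Q.parts are disjoint, hence the R-class containing a part is unique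
  have huniq : ∀ j, j < k → ∀ D ∈ R.parts, ∀ D' ∈ R.parts,
      Qs j ⊆ D → Qs j ⊆ D' → D = D' := by
    intro j hj D hD D' hD' h1 h2
    by_contra hne
    obtain ⟨a, ha⟩ := Q.nonempty_of_mem_parts (hQmem j hj)
    exact (Finset.disjoint_left.1 (R.disjoint hD hD' hne)) (h1 ha) (h2 ha)
  -- along the cycle, consecutive classes are in the same R-class
  have hstep : ∀ j, 1 ≤ j → j < k → ∀ D ∈ R.parts, ∀ D' ∈ R.parts,
      Qs (j - 1) ⊆ D → Qs j ⊆ D' → D = D' := by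
    intro j hj1 hjk D hD D' hD' hsub hsub'
    by_contra hne
    obtain ⟨h, hh, hhe, hh1, hh2, hcond⟩ := hcyc j hj1 hjk
    have hcross : Crosses h R :=
      ⟨D, hD, D', hD', hne, hh1.mono (Finset.inter_subset_inter (Finset.Subset.refl _) hsub),
        hh2.mono (Finset.inter_subset_inter (Finset.Subset.refl _) hsub')⟩
    apply hnoπ h hh hhe hcross
    rcases hcond with hzero | ⟨C, hC, hsubC⟩
    · exact Or.inl hzero
    rcases hπ h hh with hzero | ⟨hsubh, hcard⟩
    · exact Or.inl hzero
    rcases hrefine C hC with hCX | hCX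
    · obtain ⟨D'', hD'', hCD⟩ := hclass C hC hCX
      exact Or.inr ⟨D'', hD'', hsubC.trans hCD⟩
    · -- π h lies outside X but h has at least two vertices in X: contradiction
      exfalso
      obtain ⟨a, ha⟩ := hh1
      obtain ⟨b, hb⟩ := hh2
      have haX : a ∈ X := hQsub (j - 1) (by omega) (Finset.mem_inter.1 ha).2
      have hbX : b ∈ X := hQsub j hjk (Finset.mem_inter.1 hb).2
      have hab : a ≠ b := by
        rintro rfl
        have hjj : Qs (j - 1) = Qs j := by
          by_contra hne'
          have hd := Q.disjoint (hQmem (j-1) (by omega)) (hQmem j hjk) hne'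
          exact (Finset.disjoint_left.1 hd) (Finset.mem_inter.1 ha).2
            (Finset.mem_inter.1 hb).2
        have := hQinj (j-1) (by omega) j hjk hjj
        omega
      have hsubXc : π h ⊆ h \ X := by
        intro x hx
        have hxC : x ∈ C := hsubC hx
        have hxX : x ∉ X := by
          intro hxX
          have : x ∈ C ∩ X := Finset.mem_inter.2 ⟨hxC, hxX⟩
          rw [hCX] at this
          exact absurd this (Finset.notMem_empty x)
        exact Finset.mem_sdiff.2 ⟨hsubh hx, hxX⟩
      have habh : ({a, b} : Finset V) ⊆ h := by
        intro x hx
        rcases Finset.mem_insert.1 hx with rfl | hx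
        · exact (Finset.mem_inter.1 ha).1
        · rw [Finset.mem_singleton] at hx
          subst hx
          exact (Finset.mem_inter.1 hb).1
      have hsdiff : h \ X ⊆ h \ {a, b} := by
        intro x hx
        rw [Finset.mem_sdiff] at hx ⊢
        refine ⟨hx.1, ?_⟩
        intro hxab
        rcases Finset.mem_insert.1 hxab with rfl | hxab
        · exact hx.2 haX
        · rw [Finset.mem_singleton] at hxab; subst hxab; exact hx.2 hbX
      have hcab : ({a, b} : Finset V).card = 2 := Finset.card_pair hab
      have h3 : h.card ≤ 3 := by rcases H.card_edges h hh with h2 | h2 <;> omega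
      have := Finset.card_le_card (hsubXc.trans hsdiff)
      rw [Finset.card_sdiff_of_subset habh, hcab] at this
      omega
  -- all cycle classes are in the same R-class as Qs 0
  have hchain : ∀ j, j < k → ∀ D ∈ R.parts, ∀ D' ∈ R.parts,
      Qs 0 ⊆ D → Qs j ⊆ D' → D = D' := by
    intro j
    induction j with
    | zero => intro hj D hD D' hD' h0 h0'; exact huniq 0 hj D hD D' hD' h0 h0'
    | succ j ih =>
      intro hj D hD D' hD' h0 hsub
      obtain ⟨D'', hD'', hsub''⟩ := hclass (Qs j) (hQmem j (by omega)) (hQsub j (by omega))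
      have h1 : D = D'' := ih (by omega) D hD D'' hD'' h0 hsub''
      have h2 : D'' = D' := by
        have := hstep (j + 1) (by omega) hj D'' hD'' D' hD' (by simpa using hsub'') hsub
        exact this
      exact h1.trans h2
  -- finally, e crosses R and {u, v} lies inside one R-class
  obtain ⟨f, hf, hcross, hcond⟩ := hX R hR
  have hfe : f = e := by
    by_contra hfe
    exact hnoπ f hf hfe hcross hcond
  subst hfe
  obtain ⟨D0, hD0, hsub0⟩ := hclass (Qs 0) (hQmem 0 (by omega)) (hQsub 0 (by omega))
  obtain ⟨Dk, hDk, hsubk⟩ :=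
    hclass (Qs (k - 1)) (hQmem (k-1) (by omega)) (hQsub (k-1) (by omega))
  have hD0k : D0 = Dk := hchain (k - 1) (by omega) D0 hD0 Dk hDk hsub0 hsubk
  obtain ⟨-, h2⟩ := hno f hf hcross
  apply h2 D0 hD0
  rw [Function.update_self]
  intro x hx
  rcases Finset.mem_insert.1 hx with rfl | hx
  · rw [hD0k]; exact hsubk (Finset.mem_inter.1 hu).2
  · rw [Finset.mem_singleton] at hx; subst hx
    exact hsub0 (Finset.mem_inter.1 hv).2
end

section
/- Let π be a quasigraph in a 3-hypergraph H, Q a π-solid partition of V(H), and Q_1, ..., Q_k classes of Q such that for each consecutive pair Q_{j-1}, Q_j (2 ≤ j ≤ k) there is a hyperedge h_j of H distinct from a fixed hyperedge e, intersecting both Q_{j-1} and Q_j, with π(h_j) contained in Q_{j-1} or in Q_j (possibly π(h_j) = ∅). If π is anticonnected on each Q_i in H − e, then π is anticonnected on Q_1 ∪ ... ∪ Q_k in H − e. -/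
open Finset

variable {V : Type*} [DecidableEq V] [Fintype V]

theorem chain_anticonnected
    (H : Hypergraph3 V) (π : Finset V → Finset V) (hπ : IsQuasigraph H π)
    (Q : Finpartition (Finset.univ : Finset V))
    (hsolid : ∀ A ∈ Q.parts, ConnectedOn H π A ∧ Anticonnected H π A)
    (k : ℕ) (hk : 1 ≤ k) (Qs : ℕ → Finset V)
    (hQmem : ∀ i < k, Qs i ∈ Q.parts)
    (e : Finset V)
    (hchain : ∀ j, 1 ≤ j → j < k →
      ∃ h ∈ H.edges, h ≠ e ∧ (h ∩ Qs (j - 1)).Nonempty ∧ (h ∩ Qs j).Nonempty ∧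
        (π h = ∅ ∨ π h ⊆ Qs (j - 1) ∨ π h ⊆ Qs j))
    (hanti : ∀ i < k, Anticonnected (H.erase e) π (Qs i)) :
    Anticonnected (H.erase e) π ((Finset.range k).biUnion Qs) := by

  classical
  intro R hR
  by_cases hcase : ∀ i < k, ∃ A ∈ R.parts, Qs i ⊆ A
  · -- every class lies inside a single part of R; use the chain
    have hc : ∀ i, ∃ A : Finset V, i < k → A ∈ R.parts ∧ Qs i ⊆ A := by
      intro i
      by_cases hi : i < k
      · obtain ⟨A, hA, hsub⟩ := hcase i hi
        exact ⟨A, fun _ => ⟨hA, hsub⟩⟩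
      · exact ⟨∅, fun h => absurd h hi⟩
    choose c hc using hc
    -- find consecutive j with c (j-1) ≠ c j
    have hne : ∃ j, 1 ≤ j ∧ j < k ∧ c (j - 1) ≠ c j := by
      by_contra hcon
      push_neg at hcon
      have hall : ∀ i < k, c i = c 0 := by
        intro i
        induction i with
        | zero => intro _; rfl
        | succ n ih =>
          intro hn
          have h1 : c n = c (n + 1) := by
            simpa using hcon (n + 1) (Nat.le_add_left 1 n) hn
          exact h1.symm.trans (ih (Nat.lt_of_succ_lt hn))
      -- every part of R equals c 0, and c 0 = X
      have hc0 : c 0 ∈ R.parts := (hc 0 hk).1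
      have hXc0 : (Finset.range k).biUnion Qs ⊆ c 0 := by
        intro x hx
        rw [Finset.mem_biUnion] at hx
        obtain ⟨i, hi, hxi⟩ := hx
        rw [Finset.mem_range] at hi
        have := (hc i hi).2 hxi
        rwa [hall i hi] at this
      have hc0X : c 0 = (Finset.range k).biUnion Qs := le_antisymm (R.le hc0) hXc0
      have hparts : R.parts = {(Finset.range k).biUnion Qs} := by
        apply Finset.eq_singleton_iff_unique_mem.2
        refine ⟨by simpa [hc0X] using hc0, ?_⟩
        intro A hA
        obtain ⟨x, hxA⟩ := R.nonempty_of_mem_parts hA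
        have hxX : x ∈ (Finset.range k).biUnion Qs := R.le hA hxA
        have hxc0 : x ∈ c 0 := hXc0 hxX
        have := R.eq_of_mem_parts hA hc0 hxA hxc0
        rw [this, hc0X]
      exact hR hparts
    obtain ⟨j, hj1, hjk, hjne⟩ := hne
    obtain ⟨h, hhe, hne', hprev, hcur, hπh⟩ := hchain j hj1 hjk
    have hjm1 : j - 1 < k := lt_of_le_of_lt (Nat.sub_le j 1) hjk
    refine ⟨h, ?_, ?_, ?_⟩
    · exact Finset.mem_erase.2 ⟨hne', hhe⟩
    · refine ⟨c (j - 1), (hc _ hjm1).1, c j, (hc _ hjk).1, hjne, ?_, ?_⟩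
      · obtain ⟨x, hx⟩ := hprev
        rw [Finset.mem_inter] at hx
        exact ⟨x, Finset.mem_inter.2 ⟨hx.1, (hc _ hjm1).2 hx.2⟩⟩
      · obtain ⟨x, hx⟩ := hcur
        rw [Finset.mem_inter] at hx
        exact ⟨x, Finset.mem_inter.2 ⟨hx.1, (hc _ hjk).2 hx.2⟩⟩
    · rcases hπh with h0 | hp | hn
      · exact Or.inl h0
      · exact Or.inr ⟨c (j - 1), (hc _ hjm1).1, hp.trans ((hc _ hjm1).2)⟩
      · exact Or.inr ⟨c j, (hc _ hjk).1, hn.trans ((hc _ hjk).2)⟩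
  · -- some Qs i straddles R; restrict R to Qs i
    push_neg at hcase
    obtain ⟨i, hik, hstr⟩ := hcase
    have hQsub : Qs i ⊆ (Finset.range k).biUnion Qs := by
      intro x hx
      exact Finset.mem_biUnion.2 ⟨i, Finset.mem_range.2 hik, hx⟩
    have hindep : (R.parts.image (· ∩ Qs i)).SupIndep id := by
      rw [Finset.supIndep_iff_pairwiseDisjoint]
      intro u hu v hv huv
      rw [Finset.mem_coe, Finset.mem_image] at hu hv
      obtain ⟨A, hA, rfl⟩ := hu
      obtain ⟨B, hB, rfl⟩ := hv
      have hAB : A ≠ B := fun hEq => huv (by rw [hEq])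
      have := R.disjoint hA hB hAB
      exact Finset.disjoint_left.2 fun x hx hx' =>
        (Finset.disjoint_left.1 this (Finset.mem_inter.1 hx).1) (Finset.mem_inter.1 hx').1
    have hsup : (R.parts.image (· ∩ Qs i)).sup id = Qs i := by
      apply le_antisymm
      · apply Finset.sup_le
        intro b hb
        rw [Finset.mem_image] at hb
        obtain ⟨A, hA, rfl⟩ := hb
        exact Finset.inter_subset_right
      · intro x hx
        obtain ⟨A, hA, hxA⟩ := R.exists_mem (hQsub hx)
        have : A ∩ Qs i ∈ R.parts.image (· ∩ Qs i) := Finset.mem_image_of_mem _ hA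
        exact Finset.le_sup (f := id) this (Finset.mem_inter.2 ⟨hxA, hx⟩)
    set R' : Finpartition (Qs i) := Finpartition.ofErase _ hindep hsup with hR'
    have hR'mem : ∀ A' ∈ R'.parts, ∃ A ∈ R.parts, A' = A ∩ Qs i ∧ A'.Nonempty := by
      intro A' hA'
      rw [hR'] at hA'
      simp only [Finpartition.ofErase_parts, Finset.mem_erase, Finset.mem_image] at hA'
      obtain ⟨hne0, A, hA, rfl⟩ := hA'
      exact ⟨A, hA, rfl, Finset.nonempty_iff_ne_empty.2 (by simpa using hne0)⟩
    have hR'nt : R'.parts ≠ {Qs i} := by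
      intro hEq
      have : Qs i ∈ R'.parts := hEq ▸ Finset.mem_singleton_self _
      obtain ⟨A, hA, hAe, _⟩ := hR'mem _ this
      exact hstr A hA (fun x hx => (Finset.mem_inter.1 (hAe ▸ hx)).1)
    obtain ⟨f, hf, ⟨A', hA', B', hB', hA'B', hfA', hfB'⟩, hπf⟩ := hanti i hik R' hR'nt
    obtain ⟨A, hA, hAe, _⟩ := hR'mem _ hA'
    obtain ⟨B, hB, hBe, _⟩ := hR'mem _ hB'
    have hABne : A ≠ B := fun hEq => hA'B' (by rw [hAe, hBe, hEq])
    refine ⟨f, hf, ⟨A, hA, B, hB, hABne, ?_, ?_⟩, ?_⟩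
    · obtain ⟨x, hx⟩ := hfA'
      rw [Finset.mem_inter, hAe, Finset.mem_inter] at hx
      exact ⟨x, Finset.mem_inter.2 ⟨hx.1, hx.2.1⟩⟩
    · obtain ⟨x, hx⟩ := hfB'
      rw [Finset.mem_inter, hBe, Finset.mem_inter] at hx
      exact ⟨x, Finset.mem_inter.2 ⟨hx.1, hx.2.1⟩⟩
    · rcases hπf with h0 | ⟨C', hC', hsubC'⟩
      · exact Or.inl h0
      · obtain ⟨C, hC, hCe, _⟩ := hR'mem _ hC'
        exact Or.inr ⟨C, hC, hsubC'.trans (hCe ▸ Finset.inter_subset_left)⟩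
end

section
/- Let π be a quasigraph in a 3-hypergraph H and let u be a bad leaf for π, incident with hyperedges ua, ub, and ucd with π(ucd) = {u,c}. Let σ be the quasigraph in the switched hypergraph H^(u) obtained by setting σ(uc) = {u,c}, leaving uab and ud unused, and σ(f) = π(f) for all other hyperedges. Then for every X ⊆ V(H): (i) if π is anticonnected on X in H, then σ is anticonnected on X in H^(u); (ii) if π is connected on X, then σ is connected on X. -/
open Finset

variable {V : Type*} [DecidableEq V] [Fintype V]

theorem switch_preserves
    (H H' : Hypergraph3 V) (π σ : Finset V → Finset V)
    (hπ : IsQuasigraph H π) (hσq : IsQuasigraph H' σ)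
    (u a b c d : V)
    (hua : u ≠ a) (hub : u ≠ b) (huc : u ≠ c) (hud : u ≠ d)
    (hab : a ≠ b) (hcd : c ≠ d)
    -- u is a bad leaf: it is incident with exactly the hyperedges ua, ub, ucd,
    -- and the only π*-edge at u is π(ucd) = uc
    (hea : ({u, a} : Finset V) ∈ H.edges) (heb : ({u, b} : Finset V) ∈ H.edges)
    (hecd : ({u, c, d} : Finset V) ∈ H.edges)
    (hinc : ∀ f ∈ H.edges, u ∈ f → f = {u, a} ∨ f = {u, b} ∨ f = {u, c, d})
    (hπa : π {u, a} = ∅) (hπb : π {u, b} = ∅) (hπcd : π ({u, c, d} : Finset V) = {u, c})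
    -- the switched hypergraph H^(u)
    (hH' : H'.edges =
      (H.edges \ {({u, a} : Finset V), {u, b}, {u, c, d}}) ∪
        {({u, a, b} : Finset V), {u, c}, {u, d}})
    -- the switched quasigraph σ
    (hσ1 : σ ({u, c} : Finset V) = {u, c}) (hσ2 : σ ({u, a, b} : Finset V) = ∅)
    (hσ3 : σ ({u, d} : Finset V) = ∅)
    (hσ : ∀ f : Finset V,
      f ∉ ({({u, a} : Finset V), {u, b}, {u, c, d}, {u, a, b}, {u, c}, {u, d}} :
        Finset (Finset V)) → σ f = π f)
    (X : Finset V) :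
    (Anticonnected H π X → Anticonnected H' σ X) ∧
      (ConnectedOn H π X → ConnectedOn H' σ X) := by
  have hmem_uab : ({u, a, b} : Finset V) ∈ H'.edges := by
    rw [hH']; exact mem_union_right _ (by simp)
  have hmem_uc : ({u, c} : Finset V) ∈ H'.edges := by
    rw [hH']; exact mem_union_right _ (by simp)
  have hmem_ud : ({u, d} : Finset V) ∈ H'.edges := by
    rw [hH']; exact mem_union_right _ (by simp)
  have hkey : ∀ f ∈ H.edges, f ≠ {u, a} → f ≠ {u, b} → f ≠ {u, c, d} →
      σ f = π f ∧ f ∈ H'.edges := by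
    intro f hf h1 h2 h3
    constructor
    · apply hσ
      intro hmem
      simp only [mem_insert, mem_singleton] at hmem
      rcases hmem with h | h | h | h | h | h
      · exact h1 h
      · exact h2 h
      · exact h3 h
      all_goals {
        have hu : u ∈ f := by subst h; simp
        rcases hinc f hf hu with h' | h' | h'
        · exact h1 h'
        · exact h2 h'
        · exact h3 h' }
    · rw [hH']
      exact mem_union_left _ (mem_sdiff.mpr ⟨hf, by simp [h1, h2, h3]⟩)
  have hfwd : ∀ x y : V, (∃ e ∈ H'.edges, σ e = {x, y}) →
      ∃ e ∈ H.edges, π e = {x, y} := by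
    rintro x y ⟨e, he, hσe⟩
    rw [hH', mem_union] at he
    rcases he with he | he
    · rw [mem_sdiff] at he
      obtain ⟨heH, hne⟩ := he
      simp only [mem_insert, mem_singleton, not_or] at hne
      obtain ⟨hs, _⟩ := hkey e heH hne.1 hne.2.1 hne.2.2
      exact ⟨e, heH, by rw [← hs]; exact hσe⟩
    · simp only [mem_insert, mem_singleton] at he
      rcases he with rfl | rfl | rfl
      · rw [hσ2] at hσe
        exact absurd hσe.symm (by simp)
      · rw [hσ1] at hσe
        exact ⟨{u, c, d}, hecd, by rw [hπcd, hσe]⟩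
      · rw [hσ3] at hσe
        exact absurd hσe.symm (by simp)
  have hbwd : ∀ x y : V, (∃ e ∈ H.edges, π e = {x, y}) →
      ∃ e ∈ H'.edges, σ e = {x, y} := by
    rintro x y ⟨e, he, hπe⟩
    by_cases h1 : e = {u, a}
    · subst h1; rw [hπa] at hπe; exact absurd hπe.symm (by simp)
    by_cases h2 : e = {u, b}
    · subst h2; rw [hπb] at hπe; exact absurd hπe.symm (by simp)
    by_cases h3 : e = {u, c, d}
    · subst h3; rw [hπcd] at hπe
      exact ⟨{u, c}, hmem_uc, by rw [hσ1, hπe]⟩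
    · obtain ⟨hs, he'⟩ := hkey e he h1 h2 h3
      exact ⟨e, he', hs.trans hπe⟩
  have hgraph : quasiStar H' σ = quasiStar H π := by
    ext x y
    unfold quasiStar
    simp only [SimpleGraph.fromRel_adj]
    constructor
    · rintro ⟨hxy, h | h⟩
      · exact ⟨hxy, Or.inl (hfwd x y h)⟩
      · refine ⟨hxy, Or.inl (hfwd x y ?_)⟩
        obtain ⟨e, he, hs⟩ := h
        exact ⟨e, he, hs.trans (Finset.pair_comm y x)⟩
    · rintro ⟨hxy, h | h⟩
      · exact ⟨hxy, Or.inl (hbwd x y h)⟩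
      · refine ⟨hxy, Or.inl (hbwd x y ?_)⟩
        obtain ⟨e, he, hs⟩ := h
        exact ⟨e, he, hs.trans (Finset.pair_comm y x)⟩
  constructor
  · -- anticonnectedness
    intro hA R hR
    obtain ⟨f, hf, hcross, hπf⟩ := hA R hR
    by_cases h1 : f = {u, a}
    · subst h1
      refine ⟨{u, a, b}, hmem_uab, ?_, Or.inl hσ2⟩
      obtain ⟨A, hA1, B, hB1, hAB, hx1, hx2⟩ := hcross
      have hsub : ({u, a} : Finset V) ⊆ {u, a, b} := by
        intro x hx; simp only [mem_insert, mem_singleton] at hx ⊢; tauto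
      exact ⟨A, hA1, B, hB1, hAB,
        hx1.mono (inter_subset_inter hsub (Finset.Subset.refl A)),
        hx2.mono (inter_subset_inter hsub (Finset.Subset.refl B))⟩
    by_cases h2 : f = {u, b}
    · subst h2
      refine ⟨{u, a, b}, hmem_uab, ?_, Or.inl hσ2⟩
      obtain ⟨A, hA1, B, hB1, hAB, hx1, hx2⟩ := hcross
      have hsub : ({u, b} : Finset V) ⊆ {u, a, b} := by
        intro x hx; simp only [mem_insert, mem_singleton] at hx ⊢; tauto
      exact ⟨A, hA1, B, hB1, hAB,
        hx1.mono (inter_subset_inter hsub (Finset.Subset.refl A)),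
        hx2.mono (inter_subset_inter hsub (Finset.Subset.refl B))⟩
    by_cases h3 : f = {u, c, d}
    · subst h3
      rcases hπf with h | ⟨C, hC, hsubC⟩
      · rw [hπcd] at h; exact absurd h (by simp)
      rw [hπcd] at hsubC
      have huC : u ∈ C := hsubC (by simp)
      have hcC : c ∈ C := hsubC (by simp)
      obtain ⟨A, hA1, B, hB1, hAB, hx1, hx2⟩ := hcross
      have key : ∀ P ∈ R.parts, (({u, c, d} : Finset V) ∩ P).Nonempty →
          P = C ∨ d ∈ P := by
        rintro P hP ⟨x, hx⟩
        rw [mem_inter] at hx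
        obtain ⟨hx1', hx2'⟩ := hx
        simp only [mem_insert, mem_singleton] at hx1'
        rcases hx1' with rfl | rfl | rfl
        · exact Or.inl (R.eq_of_mem_parts hP hC hx2' huC)
        · exact Or.inl (R.eq_of_mem_parts hP hC hx2' hcC)
        · exact Or.inr hx2'
      rcases key A hA1 hx1 with hAC | hdA
      · rcases key B hB1 hx2 with hBC | hdB
        · exact absurd (hAC.trans hBC.symm) hAB
        · subst hAC
          refine ⟨{u, d}, hmem_ud, ⟨A, hA1, B, hB1, hAB, ?_, ?_⟩, Or.inl hσ3⟩
          · exact ⟨u, mem_inter.mpr ⟨by simp, huC⟩⟩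
          · exact ⟨d, mem_inter.mpr ⟨by simp, hdB⟩⟩
      · rcases key B hB1 hx2 with hBC | hdB
        · subst hBC
          refine ⟨{u, d}, hmem_ud, ⟨B, hB1, A, hA1, hAB.symm, ?_, ?_⟩, Or.inl hσ3⟩
          · exact ⟨u, mem_inter.mpr ⟨by simp, huC⟩⟩
          · exact ⟨d, mem_inter.mpr ⟨by simp, hdA⟩⟩
        · exact absurd (R.eq_of_mem_parts hA1 hB1 hdA hdB) hAB
    · obtain ⟨hs, hf'⟩ := hkey f hf h1 h2 h3
      exact ⟨f, hf', hcross, by rw [hs]; exact hπf⟩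
  · -- connectedness
    intro h
    unfold ConnectedOn
    rw [hgraph]
    exact h
end
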